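/- Let Θ = [θ̲, θ̄] with θ̲ < θ̄, let c > 0, let T : Θ → ℝ be continuous with T(θ) ≥ 0 for all θ, let b₀ : Θ → ℝ be differentiable with b₀'(θ) ≥ 0 for all θ, and let φ : ℝ → ℝ be differentiable with φ(0) = 0, φ'(0) = 0, and φ' strictly increasing. Suppose ρ : Θ → ℝ is differentiable with ρ(θ̲) = b₀(θ̲), ρ'(θ) > 0 for all θ, and c·φ'(ρ(θ) − b₀(θ))·ρ'(θ) = T(θ) for all θ ∈ Θ. Then for every θ ∈ Θ: ρ(θ) ≥ b₀(θ), and 0 ≤ c·φ(ρ(θ) − b₀(θ)) ≤ ∫_{θ̲}^{θ} T(u) du. -/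

import Mathlib

/-- The least-cost separating cost bound from the proofs of Proposition 4.2 and
Theorem 4.3: along the deterministic separating rule `ρ` with
`c·φ'(ρ − b₀)·ρ' = T` and `ρ(θ̲) = b₀(θ̲)`, the report exceeds the anchor and
the reporting cost satisfies `0 ≤ c·φ(ρ(θ) − b₀(θ)) ≤ Γ(θ) = ∫_{θ̲}^θ T`. -/
theorem separating_cost_bound
    (θl θu : ℝ) (hθ : θl < θu) (c : ℝ) (hc : 0 < c)
    (T : ℝ → ℝ)
    (hTcont : ContinuousOn T (Set.Icc θl θu))
    (hTnn : ∀ θ ∈ Set.Icc θl θu, 0 ≤ T θ)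
    (b₀ b₀' : ℝ → ℝ)
    (hb₀ : ∀ θ ∈ Set.Icc θl θu, HasDerivWithinAt b₀ (b₀' θ) (Set.Icc θl θu) θ)
    (hb₀nn : ∀ θ ∈ Set.Icc θl θu, 0 ≤ b₀' θ)
    (φ φ' : ℝ → ℝ)
    (hφ : ∀ u, HasDerivAt φ (φ' u) u)
    (hφ0 : φ 0 = 0) (hφ'0 : φ' 0 = 0) (hφ'mono : StrictMono φ')
    (ρ ρ' : ℝ → ℝ)
    (hρ : ∀ θ ∈ Set.Icc θl θu, HasDerivWithinAt ρ (ρ' θ) (Set.Icc θl θu) θ)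
    (hρ0 : ρ θl = b₀ θl)
    (hρ'pos : ∀ θ ∈ Set.Icc θl θu, 0 < ρ' θ)
    (hode : ∀ θ ∈ Set.Icc θl θu, c * φ' (ρ θ - b₀ θ) * ρ' θ = T θ) :
    ∀ θ ∈ Set.Icc θl θu,
      b₀ θ ≤ ρ θ ∧
      0 ≤ c * φ (ρ θ - b₀ θ) ∧
      c * φ (ρ θ - b₀ θ) ≤ ∫ u in θl..θ, T u := by
  have hle : θl ≤ θu := le_of_lt hθ
  have hlmem : θl ∈ Set.Icc θl θu := ⟨le_refl _, hle⟩
  -- φ' is nonnegative along ρ - b₀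
  have hφ'nn : ∀ θ ∈ Set.Icc θl θu, 0 ≤ φ' (ρ θ - b₀ θ) := by
    intro θ hθS
    have h := hode θ hθS
    have hρ'p := hρ'pos θ hθS
    have hT := hTnn θ hθS
    by_contra hneg
    push_neg at hneg
    nlinarith [mul_pos hc hρ'p]
  -- ρ ≥ b₀
  have hg : ∀ θ ∈ Set.Icc θl θu, b₀ θ ≤ ρ θ := by
    intro θ hθS
    by_contra h
    have hlt : φ' (ρ θ - b₀ θ) < φ' 0 := hφ'mono (by linarith)
    rw [hφ'0] at hlt
    exact absurd (hφ'nn θ hθS) (not_le.2 hlt)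
  -- φ is monotone on [0, ∞)
  have hφmono : MonotoneOn φ (Set.Ici (0:ℝ)) := by
    apply monotoneOn_of_deriv_nonneg (convex_Ici 0)
      (fun u _ => (hφ u).continuousAt.continuousWithinAt)
      (fun u _ => (hφ u).differentiableAt.differentiableWithinAt)
    intro u hu
    rw [interior_Ici] at hu
    rw [(hφ u).deriv]
    have : φ' 0 < φ' u := hφ'mono hu
    linarith [hφ'0]
  have hφnn : ∀ θ ∈ Set.Icc θl θu, 0 ≤ φ (ρ θ - b₀ θ) := by
    intro θ hθS
    have hg0 : (0:ℝ) ≤ ρ θ - b₀ θ := sub_nonneg.2 (hg θ hθS)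
    have := hφmono (Set.self_mem_Ici) hg0 hg0
    rwa [hφ0] at this
  -- the comparison function
  set G : ℝ → ℝ := fun θ => (∫ u in θl..θ, T u) - c * φ (ρ θ - b₀ θ) with hG
  have hTint : MeasureTheory.IntegrableOn T (Set.uIcc θl θu) := by
    rw [Set.uIcc_of_le hle]; exact hTcont.integrableOn_Icc
  have hIcont : ContinuousOn (fun θ => ∫ u in θl..θ, T u) (Set.Icc θl θu) := by
    have := intervalIntegral.continuousOn_primitive_interval (f := T) (a := θl) (b := θu)
      (μ := MeasureTheory.volume) hTint
    rwa [Set.uIcc_of_le hle] at this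
  have hGcont : ContinuousOn G (Set.Icc θl θu) := by
    apply hIcont.sub
    apply (continuousOn_const.mul ?_)
    have hφc : Continuous φ := continuous_iff_continuousAt.2 fun u => (hφ u).continuousAt
    have hρc : ContinuousOn ρ (Set.Icc θl θu) := fun θ hθS => (hρ θ hθS).continuousWithinAt
    have hbc : ContinuousOn b₀ (Set.Icc θl θu) := fun θ hθS => (hb₀ θ hθS).continuousWithinAt
    exact hφc.comp_continuousOn (hρc.sub hbc)
  -- derivative of G at interior points
  have hGderiv : ∀ θ ∈ Set.Ioo θl θu,
      HasDerivAt G (T θ - c * (φ' (ρ θ - b₀ θ) * (ρ' θ - b₀' θ))) θ := by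
    intro θ hθI
    have hθS : θ ∈ Set.Icc θl θu := Set.Ioo_subset_Icc_self hθI
    have hnhds : Set.Icc θl θu ∈ nhds θ := Icc_mem_nhds hθI.1 hθI.2
    have hI : HasDerivAt (fun x => ∫ u in θl..x, T u) (T θ) θ := by
      apply intervalIntegral.integral_hasDerivAt_right
      · exact (hTcont.mono (by
          rw [Set.uIcc_of_le hθS.1]
          exact Set.Icc_subset_Icc le_rfl hθS.2)).intervalIntegrable
      · exact AEStronglyMeasurable.stronglyMeasurableAtFilter_of_mem
          (hTcont.aestronglyMeasurable measurableSet_Icc) hnhds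
      · exact hTcont.continuousAt hnhds
    have hρa : HasDerivAt ρ (ρ' θ) θ := (hρ θ hθS).hasDerivAt hnhds
    have hba : HasDerivAt b₀ (b₀' θ) θ := (hb₀ θ hθS).hasDerivAt hnhds
    have hcomp : HasDerivAt (fun x => φ (ρ x - b₀ x))
        (φ' (ρ θ - b₀ θ) * (ρ' θ - b₀' θ)) θ :=
      (hφ (ρ θ - b₀ θ)).comp θ (hρa.sub hba)
    exact hI.sub ((hcomp.const_mul c))
  -- G is monotone on the interval
  have hGmono : MonotoneOn G (Set.Icc θl θu) := by
    apply monotoneOn_of_deriv_nonneg (convex_Icc θl θu) hGcont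
    · intro θ hθI
      rw [interior_Icc] at hθI
      exact (hGderiv θ hθI).differentiableAt.differentiableWithinAt
    · intro θ hθI
      rw [interior_Icc] at hθI
      have hθS : θ ∈ Set.Icc θl θu := Set.Ioo_subset_Icc_self hθI
      rw [(hGderiv θ hθI).deriv]
      have h := hode θ hθS
      have h1 := hφ'nn θ hθS
      have h2 := hb₀nn θ hθS
      nlinarith [mul_nonneg (mul_nonneg hc.le h1) h2]
  -- conclude
  intro θ hθS
  refine ⟨hg θ hθS, ?_, ?_⟩
  · exact mul_nonneg hc.le (hφnn θ hθS)
  · have h0 : G θl = 0 := by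
      simp [hG, hρ0, hφ0]
    have := hGmono hlmem hθS hθS.1
    rw [h0] at this
    simp only [hG] at this
    linarith
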